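/- Let F : [a,b] → [0,1] be a continuous strictly increasing CDF with F(a)=0, F(b)=1, and let Q : [a,b] → [0,1] be a measurable function. Define the monotone rearrangement Q†(θ) = G⁻¹(F(θ)), where G(z) = ∫_a^b 1[Q(t) ≤ z] dF(t) and G⁻¹ is the generalized inverse. Then ∫_a^b θ·Q†(θ) dF(θ) ≥ ∫_a^b θ·Q(θ) dF(θ). -/

import Mathlib

open MeasureTheory
open scoped ENNReal


lemma aux_repr {a b : ℝ} (μ : Measure ℝ) [IsFiniteMeasure μ]
    (R : ℝ → ℝ) (hR : Measurable R) (hR1 : ∀ θ, R θ ≤ 1)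
    (hae : ∀ᵐ θ ∂μ, θ ∈ Set.Icc a b) :
    ∫⁻ θ, ENNReal.ofReal ((θ - a) * R θ) ∂μ
      = ∫⁻ p, μ {θ | p.1 < θ ∧ p.2 < R θ}
          ∂(((volume : Measure ℝ).restrict (Set.Ioo a b)).prod
            ((volume : Measure ℝ).restrict (Set.Ioo 0 1))) := by
  set ρ := ((volume : Measure ℝ).restrict (Set.Ioo a b)).prod
      ((volume : Measure ℝ).restrict (Set.Ioo 0 1)) with hρ
  set f : ℝ → ℝ × ℝ → ℝ≥0∞ := fun θ p =>
    Set.indicator {q : ℝ × ℝ | q.1 < θ ∧ q.2 < R θ} 1 p with hf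
  have hT : MeasurableSet {x : ℝ × (ℝ × ℝ) | x.2.1 < x.1 ∧ x.2.2 < R x.1} := by
    have h1 : MeasurableSet {x : ℝ × (ℝ × ℝ) | x.2.1 < x.1} :=
      measurableSet_lt (measurable_snd.fst) measurable_fst
    have h2 : MeasurableSet {x : ℝ × (ℝ × ℝ) | x.2.2 < R x.1} :=
      measurableSet_lt measurable_snd.snd (hR.comp measurable_fst)
    exact h1.inter h2
  have huncurry : Function.uncurry f =
      Set.indicator {x : ℝ × (ℝ × ℝ) | x.2.1 < x.1 ∧ x.2.2 < R x.1} 1 := by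
    funext x
    simp only [Function.uncurry, hf, Set.indicator_apply, Set.mem_setOf_eq, Pi.one_apply]
  have hmeas : AEMeasurable (Function.uncurry f) (μ.prod ρ) := by
    rw [huncurry]
    exact ((measurable_const.indicator hT)).aemeasurable
  have step1 : ∫⁻ θ, ENNReal.ofReal ((θ - a) * R θ) ∂μ = ∫⁻ θ, ∫⁻ p, f θ p ∂ρ ∂μ := by
    refine lintegral_congr_ae ?_
    filter_upwards [hae] with θ hθ
    have hset : {q : ℝ × ℝ | q.1 < θ ∧ q.2 < R θ} = Set.Iio θ ×ˢ Set.Iio (R θ) := by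
      ext q; simp [Set.mem_prod]
    have hS : MeasurableSet {q : ℝ × ℝ | q.1 < θ ∧ q.2 < R θ} := by
      rw [hset]; exact measurableSet_Iio.prod measurableSet_Iio
    have hind : ∫⁻ p, f θ p ∂ρ = ρ {q : ℝ × ℝ | q.1 < θ ∧ q.2 < R θ} :=
      lintegral_indicator_one hS
    rw [hind, hset, hρ, Measure.prod_prod, Measure.restrict_apply measurableSet_Iio,
      Measure.restrict_apply measurableSet_Iio]
    have h1 : Set.Iio θ ∩ Set.Ioo a b = Set.Ioo a θ := by
      ext x
      simp only [Set.mem_inter_iff, Set.mem_Iio, Set.mem_Ioo]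
      constructor
      · rintro ⟨h1, h2, h3⟩; exact ⟨h2, h1⟩
      · rintro ⟨h2, h1⟩; exact ⟨h1, h2, lt_of_lt_of_le h1 hθ.2⟩
    have h2 : Set.Iio (R θ) ∩ Set.Ioo 0 1 = Set.Ioo 0 (R θ) := by
      ext x
      simp only [Set.mem_inter_iff, Set.mem_Iio, Set.mem_Ioo]
      constructor
      · rintro ⟨h1, h2, h3⟩; exact ⟨h2, h1⟩
      · rintro ⟨h2, h1⟩; exact ⟨h1, h2, lt_of_lt_of_le h1 (hR1 θ)⟩
    rw [h1, h2, Real.volume_Ioo, Real.volume_Ioo,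
      ← ENNReal.ofReal_mul (sub_nonneg.2 hθ.1), sub_zero]
  have step2 : ∫⁻ θ, ∫⁻ p, f θ p ∂ρ ∂μ = ∫⁻ p, ∫⁻ θ, f θ p ∂μ ∂ρ :=
    lintegral_lintegral_swap hmeas
  have step3 : ∀ p : ℝ × ℝ, ∫⁻ θ, f θ p ∂μ = μ {θ | p.1 < θ ∧ p.2 < R θ} := by
    intro p
    have hS : MeasurableSet {θ | p.1 < θ ∧ p.2 < R θ} := by
      have h1 : MeasurableSet {θ : ℝ | p.1 < θ} := measurableSet_Ioi
      have h2 : MeasurableSet {θ : ℝ | p.2 < R θ} := hR measurableSet_Ioi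
      exact h1.inter h2
    have hfun : (fun θ => f θ p)
        = fun θ => Set.indicator {θ | p.1 < θ ∧ p.2 < R θ} 1 θ := by
      funext θ
      simp only [hf, Set.indicator_apply, Set.mem_setOf_eq, Pi.one_apply]
    rw [show ∫⁻ θ, f θ p ∂μ = ∫⁻ θ, Set.indicator {θ | p.1 < θ ∧ p.2 < R θ} 1 θ ∂μ from by
      rw [← hfun]]
    exact lintegral_indicator_one hS
  rw [step1, step2]
  exact lintegral_congr step3
/-- Hardy–Littlewood inequality for the monotone rearrangement
Q†(θ) = G⁻¹(F(θ)): rearranging the allocation weakly increases ∫ θ·Q(θ) dF(θ). -/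
theorem stmt_4 (a b : ℝ) (hab : a < b)
    (μ : Measure ℝ) [IsProbabilityMeasure μ]
    (hsupp : μ (Set.Icc a b)ᶜ = 0)
    (F Q Qdag G : ℝ → ℝ)
    (hF : ∀ θ, F θ = (μ (Set.Iic θ)).toReal)
    (hFcont : ContinuousOn F (Set.Icc a b))
    (hFstrict : StrictMonoOn F (Set.Icc a b))
    (hFa : F a = 0) (hFb : F b = 1)
    (hQmeas : Measurable Q)
    (hQrange : ∀ θ, Q θ ∈ Set.Icc (0:ℝ) 1)
    (hG : ∀ z, G z = (μ {t | Q t ≤ z}).toReal)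
    (hQdag : ∀ θ, Qdag θ = sInf {z : ℝ | F θ ≤ G z}) :
    ∫ θ, θ * Q θ ∂μ ≤ ∫ θ, θ * Qdag θ ∂μ := by
  have hfin : ∀ s : Set ℝ, μ s ≠ ⊤ := fun s => measure_ne_top μ s
  have hae : ∀ᵐ θ ∂μ, θ ∈ Set.Icc a b := by
    rw [MeasureTheory.ae_iff]
    exact hsupp
  have hIic : ∀ θ, μ (Set.Iic θ) = ENNReal.ofReal (F θ) := fun θ => by
    rw [hF]; exact (ENNReal.ofReal_toReal (hfin _)).symm
  have hQle : ∀ u, μ {t | Q t ≤ u} = ENNReal.ofReal (G u) := fun u => by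
    rw [hG]; exact (ENNReal.ofReal_toReal (hfin _)).symm
  have hFmono : Monotone F := fun x y h => by
    rw [hF, hF]
    exact ENNReal.toReal_mono (hfin _) (measure_mono (Set.Iic_subset_Iic.2 h))
  have hF0 : ∀ θ, 0 ≤ F θ := fun θ => by rw [hF]; exact ENNReal.toReal_nonneg
  have hF1 : ∀ θ, F θ ≤ 1 := fun θ => by
    rw [hF]
    have : μ (Set.Iic θ) ≤ 1 := prob_le_one
    simpa using ENNReal.toReal_mono (by simp) this
  have hGmono : Monotone G := fun x y h => by
    rw [hG, hG]
    exact ENNReal.toReal_mono (hfin _) (measure_mono (fun t ht => le_trans ht h))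
  have hG0 : ∀ z, 0 ≤ G z := fun z => by rw [hG]; exact ENNReal.toReal_nonneg
  have hG1 : ∀ z, G z ≤ 1 := fun z => by
    rw [hG]
    have : μ {t | Q t ≤ z} ≤ 1 := prob_le_one
    simpa using ENNReal.toReal_mono (by simp) this
  have hGneg : ∀ z, z < 0 → G z = 0 := fun z hz => by
    rw [hG]
    have : {t | Q t ≤ z} = ∅ := by
      ext t
      simp only [Set.mem_setOf_eq, Set.mem_empty_iff_false, iff_false, not_le]
      exact lt_of_lt_of_le hz (hQrange t).1
    rw [this, measure_empty]; simp
  have hSne : ∀ θ, (1:ℝ) ∈ {z | F θ ≤ G z} := fun θ => by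
    have : {t | Q t ≤ (1:ℝ)} = Set.univ := by
      ext t; simpa using (hQrange t).2
    simp only [Set.mem_setOf_eq, hG, this, measure_univ]
    simpa using hF1 θ
  have hSbdd : ∀ θ, 0 < F θ → {z | F θ ≤ G z} ⊆ Set.Ici 0 := by
    intro θ hθ z hz
    by_contra h
    simp only [Set.mem_Ici, not_le] at h
    rw [Set.mem_setOf_eq, hGneg z (by simpa using h)] at hz
    exact absurd (lt_of_lt_of_le hθ hz) (lt_irrefl 0)
  have hQdag0 : ∀ θ, F θ = 0 → Qdag θ = 0 := by
    intro θ h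
    rw [hQdag]
    have : {z : ℝ | F θ ≤ G z} = Set.univ := by
      ext z; simp only [Set.mem_setOf_eq, Set.mem_univ, iff_true, h]; exact hG0 z
    rw [this, Real.sInf_of_not_bddBelow (by simpa using not_bddBelow_univ)]
  have hQdag_nonneg : ∀ θ, 0 ≤ Qdag θ := by
    intro θ
    rcases lt_or_eq_of_le (hF0 θ) with h | h
    · rw [hQdag]
      exact le_csInf ⟨1, hSne θ⟩ (fun z hz => hSbdd θ h hz)
    · rw [hQdag0 θ h.symm]
  have hQdag1 : ∀ θ, Qdag θ ≤ 1 := by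
    intro θ
    rw [hQdag]
    by_cases hb : BddBelow {z : ℝ | F θ ≤ G z}
    · exact csInf_le hb (hSne θ)
    · rw [Real.sInf_of_not_bddBelow hb]; exact zero_le_one
  have hQdag_mono : Monotone Qdag := by
    intro x y hxy
    rcases lt_or_eq_of_le (hF0 x) with h | h
    · rw [hQdag, hQdag]
      refine csInf_le_csInf (bddBelow_Ici.mono (hSbdd x h)) ⟨1, hSne y⟩ ?_
      intro z hz
      exact le_trans (hFmono hxy) hz
    · rw [hQdag0 x h.symm]
      exact hQdag_nonneg y
  -- the key iff: for u > 0, Qdag θ ≤ u ↔ F θ ≤ G u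
  have hiff : ∀ u : ℝ, 0 < u → ∀ θ, (Qdag θ ≤ u ↔ F θ ≤ G u) := by
    intro u hu θ
    constructor
    · intro h
      rcases lt_or_eq_of_le (hF0 θ) with hFθ | hFθ
      · have hbdd : BddBelow {z : ℝ | F θ ≤ G z} := bddBelow_Ici.mono (hSbdd θ hFθ)
        have key : ∀ n : ℕ, F θ ≤ G (u + 1/(n+1)) := by
          intro n
          have hlt : sInf {z : ℝ | F θ ≤ G z} < u + 1/(n+1) := by
            rw [← hQdag]
            have : (0:ℝ) < 1/((n:ℝ)+1) := by positivity
            linarith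
          obtain ⟨z, hzS, hzlt⟩ := (csInf_lt_iff hbdd ⟨1, hSne θ⟩).1 hlt
          exact le_trans hzS (hGmono hzlt.le)
        have key' : ∀ n : ℕ, μ (Set.Iic θ) ≤ μ {t | Q t ≤ u + 1/(n+1)} := by
          intro n
          have := key n
          rw [hF, hG] at this
          exact (ENNReal.toReal_le_toReal (hfin _) (hfin _)).1 this
        have hset : ⋂ n : ℕ, {t | Q t ≤ u + 1/((n:ℝ)+1)} = {t | Q t ≤ u} := by
          ext t
          simp only [Set.mem_iInter, Set.mem_setOf_eq]
          constructor
          · intro h'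
            by_contra hc
            push_neg at hc
            obtain ⟨n, hn⟩ := exists_nat_one_div_lt (sub_pos.2 hc)
            have := h' n
            linarith
          · intro h' n
            have : (0:ℝ) < 1/((n:ℝ)+1) := by positivity
            linarith
        have hmono2 : Antitone (fun n : ℕ => {t | Q t ≤ u + 1/((n:ℝ)+1)}) := by
          intro m n hmn t ht
          simp only [Set.mem_setOf_eq] at ht ⊢
          have hcast : (m:ℝ) ≤ (n:ℝ) := Nat.cast_le.mpr hmn
          have h1 : 1/((n:ℝ)+1) ≤ 1/((m:ℝ)+1) :=
            one_div_le_one_div_of_le (by positivity) (by linarith)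
          linarith
        have hInter : μ {t | Q t ≤ u} = ⨅ n : ℕ, μ {t | Q t ≤ u + 1/((n:ℝ)+1)} := by
          rw [← hset]
          exact Directed.measure_iInter
            (fun n => (hQmeas measurableSet_Iic).nullMeasurableSet)
            hmono2.directed_ge ⟨0, hfin _⟩
        have : μ (Set.Iic θ) ≤ μ {t | Q t ≤ u} := by
          rw [hInter]
          exact le_iInf key'
        rw [hF, hG]
        exact ENNReal.toReal_mono (hfin _) this
      · rw [← hFθ]; exact hG0 u
    · intro h
      have hmem : u ∈ {z : ℝ | F θ ≤ G z} := h
      rw [hQdag]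
      by_cases hb : BddBelow {z : ℝ | F θ ≤ G z}
      · exact csInf_le hb hmem
      · rw [Real.sInf_of_not_bddBelow hb]; exact hu.le
  -- uniform distribution of F under μ
  have hunif : ∀ c : ℝ, 0 ≤ c → c < 1 → μ {θ | c < F θ} = ENNReal.ofReal (1 - c) := by
    intro c hc0 hc1
    have hmem : c ∈ Set.Icc (F a) (F b) := by rw [hFa, hFb]; exact ⟨hc0, hc1.le⟩
    obtain ⟨θc, hθc, hFθc⟩ := intermediate_value_Icc hab.le hFcont hmem
    have hKey : {θ | c < F θ} ∩ Set.Icc a b = Set.Ioi θc ∩ Set.Icc a b := by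
      ext θ
      simp only [Set.mem_inter_iff, Set.mem_setOf_eq, Set.mem_Ioi]
      constructor
      · rintro ⟨h1, h2⟩
        refine ⟨?_, h2⟩
        by_contra hle
        push_neg at hle
        rcases lt_or_eq_of_le hle with hlt | heq
        · have := hFstrict h2 hθc hlt
          rw [hFθc] at this
          linarith
        · rw [heq, hFθc] at h1; exact lt_irrefl c h1
      · rintro ⟨h1, h2⟩
        exact ⟨hFθc ▸ hFstrict hθc h2 h1, h2⟩
    calc μ {θ | c < F θ} = μ ({θ | c < F θ} ∩ Set.Icc a b) := (measure_inter_conull hsupp).symm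
      _ = μ (Set.Ioi θc ∩ Set.Icc a b) := by rw [hKey]
      _ = μ (Set.Ioi θc) := measure_inter_conull hsupp
      _ = ENNReal.ofReal (1 - c) := by
          rw [← Set.compl_Iic, measure_compl measurableSet_Iic (hfin _), measure_univ,
            hIic, hFθc, ← ENNReal.ofReal_one, ← ENNReal.ofReal_sub 1 hc0]
  -- equimeasurability
  have hE : ∀ u : ℝ, 0 < u → μ {θ | u < Qdag θ} = μ {θ | u < Q θ} := by
    intro u hu
    by_cases h1 : 1 ≤ u
    · have e1 : {θ | u < Qdag θ} = ∅ := by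
        ext θ; simp only [Set.mem_setOf_eq, Set.mem_empty_iff_false, iff_false, not_lt]
        exact le_trans (hQdag1 θ) h1
      have e2 : {θ | u < Q θ} = ∅ := by
        ext θ; simp only [Set.mem_setOf_eq, Set.mem_empty_iff_false, iff_false, not_lt]
        exact le_trans (hQrange θ).2 h1
      rw [e1, e2]
    · push_neg at h1
      have hset : {θ | u < Qdag θ} = {θ | G u < F θ} := by
        ext θ
        simp only [Set.mem_setOf_eq, ← not_le]
        exact not_congr (hiff u hu θ)
      have hRHS : μ {θ | u < Q θ} = 1 - ENNReal.ofReal (G u) := by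
        have hms : MeasurableSet {t : ℝ | Q t ≤ u} := hQmeas measurableSet_Iic
        have hcompl : {θ | u < Q θ} = {t | Q t ≤ u}ᶜ := by
          ext t; simp [not_le]
        rw [hcompl, measure_compl hms (hfin _), measure_univ, hQle]
      rcases lt_or_eq_of_le (hG1 u) with hc | hc
      · rw [hset, hunif (G u) (hG0 u) hc, hRHS, ← ENNReal.ofReal_one,
          ← ENNReal.ofReal_sub 1 (hG0 u)]
      · have e1 : {θ | G u < F θ} = ∅ := by
          ext θ
          simp only [Set.mem_setOf_eq, Set.mem_empty_iff_false, iff_false, not_lt, hc]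
          exact hF1 θ
        rw [hset, e1, hRHS, hc]
        simp
  -- pointwise comparison
  have hpt : ∀ s u : ℝ, 0 < u →
      μ {θ | s < θ ∧ u < Q θ} ≤ μ {θ | s < θ ∧ u < Qdag θ} := by
    intro s u hu
    have hA : IsUpperSet {θ : ℝ | s < θ} := fun x y hxy hx => lt_of_lt_of_le hx hxy
    have hB : IsUpperSet {θ : ℝ | u < Qdag θ} := fun x y hxy hx =>
      lt_of_lt_of_le hx (hQdag_mono hxy)
    have hsplit : {θ | s < θ ∧ u < Qdag θ} = {θ : ℝ | s < θ} ∩ {θ : ℝ | u < Qdag θ} := rfl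
    have hsplit' : {θ | s < θ ∧ u < Q θ} = {θ : ℝ | s < θ} ∩ {θ : ℝ | u < Q θ} := rfl
    rcases hA.total hB with h | h
    · rw [hsplit, Set.inter_eq_left.2 h, hsplit']
      exact measure_mono Set.inter_subset_left
    · rw [hsplit, Set.inter_eq_right.2 h, hE u hu, hsplit']
      exact measure_mono Set.inter_subset_right
  -- lintegral comparison via the representation
  have hQdag_meas : Measurable Qdag := hQdag_mono.measurable
  have hlin : ∫⁻ θ, ENNReal.ofReal ((θ - a) * Q θ) ∂μ
      ≤ ∫⁻ θ, ENNReal.ofReal ((θ - a) * Qdag θ) ∂μ := by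
    rw [aux_repr μ Q hQmeas (fun θ => (hQrange θ).2) hae,
      aux_repr μ Qdag hQdag_meas hQdag1 hae]
    rw [Measure.prod_restrict]
    refine lintegral_mono_ae ?_
    filter_upwards [ae_restrict_mem (measurableSet_Ioo.prod measurableSet_Ioo)] with p hp
    exact hpt p.1 p.2 hp.2.1
  have hlin2 : ∫⁻ θ, ENNReal.ofReal (Q θ) ∂μ = ∫⁻ θ, ENNReal.ofReal (Qdag θ) ∂μ := by
    rw [lintegral_eq_lintegral_meas_lt μ (Filter.Eventually.of_forall fun θ => (hQrange θ).1)
        hQmeas.aemeasurable,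
      lintegral_eq_lintegral_meas_lt μ (Filter.Eventually.of_forall hQdag_nonneg)
        hQdag_meas.aemeasurable]
    refine setLIntegral_congr_fun measurableSet_Ioi ?_
    exact fun t ht => (hE t ht).symm
  -- finiteness
  have hfin2 : ∫⁻ θ, ENNReal.ofReal ((θ - a) * Qdag θ) ∂μ ≠ ⊤ := by
    have hb : ∫⁻ θ, ENNReal.ofReal ((θ - a) * Qdag θ) ∂μ ≤ ENNReal.ofReal (b - a) := by
      have : ∫⁻ θ, ENNReal.ofReal ((θ - a) * Qdag θ) ∂μ
          ≤ ∫⁻ _θ, ENNReal.ofReal (b - a) ∂μ := by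
        refine lintegral_mono_ae ?_
        filter_upwards [hae] with θ hθ
        refine ENNReal.ofReal_le_ofReal ?_
        calc (θ - a) * Qdag θ ≤ (b - a) * 1 :=
              mul_le_mul (by linarith [hθ.2]) (hQdag1 θ) (hQdag_nonneg θ) (by linarith)
          _ = b - a := mul_one _
      simpa using this
    exact ne_top_of_le_ne_top ENNReal.ofReal_ne_top hb
  -- measurability of the real functions
  have hm1 : Measurable (fun θ : ℝ => (θ - a) * Q θ) :=
    ((measurable_id.sub measurable_const).mul hQmeas)
  have hm2 : Measurable (fun θ : ℝ => (θ - a) * Qdag θ) :=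
    ((measurable_id.sub measurable_const).mul hQdag_meas)
  -- nonnegativity
  have hnn1 : 0 ≤ᵐ[μ] fun θ => (θ - a) * Q θ := by
    filter_upwards [hae] with θ hθ
    exact mul_nonneg (sub_nonneg.2 hθ.1) (hQrange θ).1
  have hnn2 : 0 ≤ᵐ[μ] fun θ => (θ - a) * Qdag θ := by
    filter_upwards [hae] with θ hθ
    exact mul_nonneg (sub_nonneg.2 hθ.1) (hQdag_nonneg θ)
  have hle : ∫ θ, (θ - a) * Q θ ∂μ ≤ ∫ θ, (θ - a) * Qdag θ ∂μ := by
    rw [integral_eq_lintegral_of_nonneg_ae hnn1 hm1.aestronglyMeasurable,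
      integral_eq_lintegral_of_nonneg_ae hnn2 hm2.aestronglyMeasurable]
    exact ENNReal.toReal_mono hfin2 hlin
  have hQeq : ∫ θ, Q θ ∂μ = ∫ θ, Qdag θ ∂μ := by
    rw [integral_eq_lintegral_of_nonneg_ae
        (Filter.Eventually.of_forall fun θ => (hQrange θ).1) hQmeas.aestronglyMeasurable,
      integral_eq_lintegral_of_nonneg_ae
        (Filter.Eventually.of_forall hQdag_nonneg) hQdag_meas.aestronglyMeasurable,
      hlin2]
  -- integrability
  have hbound : ∀ᵐ θ ∂μ, |θ| ≤ max |a| |b| := by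
    filter_upwards [hae] with θ hθ
    have ha1 : -|a| ≤ a := neg_abs_le a
    have ha2 : |a| ≤ max |a| |b| := le_max_left _ _
    have h2 : θ ≤ max |a| |b| := le_trans hθ.2 ((le_abs_self b).trans (le_max_right _ _))
    rw [abs_le]
    exact ⟨by linarith [hθ.1], h2⟩
  have intQ : Integrable Q μ := by
    refine Integrable.mono' (integrable_const 1) hQmeas.aestronglyMeasurable ?_
    refine Filter.Eventually.of_forall fun θ => ?_
    rw [Real.norm_eq_abs, abs_le]
    exact ⟨by linarith [(hQrange θ).1], (hQrange θ).2⟩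
  have intQdag : Integrable Qdag μ := by
    refine Integrable.mono' (integrable_const 1) hQdag_meas.aestronglyMeasurable ?_
    refine Filter.Eventually.of_forall fun θ => ?_
    rw [Real.norm_eq_abs, abs_le]
    exact ⟨by linarith [hQdag_nonneg θ], hQdag1 θ⟩
  have intθQ : Integrable (fun θ => θ * Q θ) μ := by
    refine Integrable.mono' (integrable_const (max |a| |b|))
      (measurable_id.mul hQmeas).aestronglyMeasurable ?_
    filter_upwards [hbound] with θ hθ
    rw [Real.norm_eq_abs, abs_mul]
    calc |θ| * |Q θ| ≤ max |a| |b| * 1 := by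
          refine mul_le_mul hθ ?_ (abs_nonneg _) (le_trans (abs_nonneg θ) hθ)
          rw [abs_le]; exact ⟨by linarith [(hQrange θ).1], (hQrange θ).2⟩
      _ = max |a| |b| := mul_one _
  have intθQdag : Integrable (fun θ => θ * Qdag θ) μ := by
    refine Integrable.mono' (integrable_const (max |a| |b|))
      (measurable_id.mul hQdag_meas).aestronglyMeasurable ?_
    filter_upwards [hbound] with θ hθ
    rw [Real.norm_eq_abs, abs_mul]
    calc |θ| * |Qdag θ| ≤ max |a| |b| * 1 := by
          refine mul_le_mul hθ ?_ (abs_nonneg _) (le_trans (abs_nonneg θ) hθ)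
          rw [abs_le]; exact ⟨by linarith [hQdag_nonneg θ], hQdag1 θ⟩
      _ = max |a| |b| := mul_one _
  -- assembly
  have expand : ∀ (R : ℝ → ℝ), Integrable (fun θ => θ * R θ) μ → Integrable R μ →
      ∫ θ, θ * R θ ∂μ = (∫ θ, (θ - a) * R θ ∂μ) + a * ∫ θ, R θ ∂μ := by
    intro R hint hintR
    have h1 : (fun θ => (θ - a) * R θ) = fun θ => θ * R θ - a * R θ := by
      funext θ; ring
    rw [h1, integral_sub hint (hintR.const_mul a), integral_const_mul]
    ring
  rw [expand Q intθQ intQ, expand Qdag intθQdag intQdag, hQeq]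
  linarith [hle]
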